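/- Under the parametrized Sinkhorn setup, there exist a map x̄ : Ω → ℝ^n satisfying F(x̄(θ), θ) = x̄(θ) for every θ ∈ Ω such that θ ↦ L_center(x̄(θ)) is continuous on Ω, and continuous functions c : Ω → ℝ_{>0} and ρ : Ω → (0,1), such that for every k ∈ ℕ and every θ ∈ Ω, ‖L_center(x_k(θ)) − L_center(x̄(θ))‖_∞ ≤ c(θ) ρ(θ)^k. -/

import Mathlib

open Finset


lemma sk_sum_pos {q r : ℕ} [NeZero r] (M : Fin q → Fin r → ℝ) (hM : ∀ i j, 0 < M i j)
    (v : Fin r → ℝ) (hv : ∀ j, 0 < v j) (i : Fin q) : 0 < ∑ j, M i j * v j :=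
  Finset.sum_pos (fun j _ => mul_pos (hM i j) (hv j)) Finset.univ_nonempty

lemma sk_lse_le {q r : ℕ} [NeZero r] (M : Fin q → Fin r → ℝ) (hM : ∀ i j, 0 < M i j)
    (z w : Fin r → ℝ) (c : ℝ) (h : ∀ j, z j ≤ w j + c) (i : Fin q) :
    Real.log (∑ j, M i j * Real.exp (z j)) ≤ Real.log (∑ j, M i j * Real.exp (w j)) + c := by
  have hwpos : 0 < ∑ j, M i j * Real.exp (w j) := sk_sum_pos M hM _ (fun j => Real.exp_pos _) i
  have hzpos : 0 < ∑ j, M i j * Real.exp (z j) := sk_sum_pos M hM _ (fun j => Real.exp_pos _) i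
  have hle : ∑ j, M i j * Real.exp (z j) ≤ Real.exp c * ∑ j, M i j * Real.exp (w j) := by
    rw [Finset.mul_sum]
    refine Finset.sum_le_sum fun j _ => ?_
    have : Real.exp (z j) ≤ Real.exp c * Real.exp (w j) := by
      rw [← Real.exp_add]; exact Real.exp_le_exp.mpr (by linarith [h j])
    nlinarith [le_of_lt (hM i j), Real.exp_pos (z j)]
  calc Real.log (∑ j, M i j * Real.exp (z j)) ≤ Real.log (Real.exp c * ∑ j, M i j * Real.exp (w j)) :=
        Real.log_le_log hzpos hle
    _ = Real.log (∑ j, M i j * Real.exp (w j)) + c := by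
        rw [Real.log_mul (Real.exp_ne_zero c) (ne_of_gt hwpos), Real.log_exp]; ring

/-- The key scalar inequality: `(1-t)e^Δ + t ≤ exp((1 - t e^{-Δs}) Δ)`. -/
lemma sk_phi_le {t Δ Δs : ℝ} (ht0 : 0 ≤ t) (ht1 : t ≤ 1) (hΔ0 : 0 ≤ Δ) (hΔs : Δ ≤ Δs) :
    (1 - t) * Real.exp Δ + t ≤ Real.exp ((1 - t * Real.exp (-Δs)) * Δ) := by
  have h1 : (1 - t) * Real.exp Δ + t = Real.exp Δ * (1 - t * (1 - Real.exp (-Δ))) := by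
    rw [Real.exp_neg]
    field_simp
    ring
  have h2 : 1 - t * (1 - Real.exp (-Δ)) ≤ Real.exp (-(t * (1 - Real.exp (-Δ)))) := by
    have := Real.add_one_le_exp (-(t * (1 - Real.exp (-Δ))))
    linarith
  have h3 : Δ * Real.exp (-Δ) ≤ 1 - Real.exp (-Δ) := by
    have h := Real.add_one_le_exp Δ
    have hpos : 0 < Real.exp (-Δ) := Real.exp_pos _
    have : Real.exp (-Δ) * (Δ + 1) ≤ Real.exp (-Δ) * Real.exp Δ :=
      mul_le_mul_of_nonneg_left h (le_of_lt hpos)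
    rw [← Real.exp_add] at this
    simp at this
    linarith
  have h4 : Δ * Real.exp (-Δs) ≤ Δ * Real.exp (-Δ) :=
    mul_le_mul_of_nonneg_left (Real.exp_le_exp.mpr (by linarith)) hΔ0
  have h5 : -(t * (1 - Real.exp (-Δ))) ≤ -(t * (Δ * Real.exp (-Δs)))  := by
    have : t * (Δ * Real.exp (-Δs)) ≤ t * (1 - Real.exp (-Δ)) :=
      mul_le_mul_of_nonneg_left (le_trans h4 h3) ht0
    linarith
  calc (1 - t) * Real.exp Δ + t = Real.exp Δ * (1 - t * (1 - Real.exp (-Δ))) := h1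
    _ ≤ Real.exp Δ * Real.exp (-(t * (1 - Real.exp (-Δ)))) :=
        mul_le_mul_of_nonneg_left h2 (le_of_lt (Real.exp_pos _))
    _ ≤ Real.exp Δ * Real.exp (-(t * (Δ * Real.exp (-Δs)))) :=
        mul_le_mul_of_nonneg_left (Real.exp_le_exp.mpr h5) (le_of_lt (Real.exp_pos _))
    _ = Real.exp ((1 - t * Real.exp (-Δs)) * Δ) := by rw [← Real.exp_add]; ring_nf

/-- Birkhoff-type contraction of the log-sum-exp map in the oscillation seminorm. -/
lemma sk_lse_contract {q r : ℕ} [NeZero r] (M : Fin q → Fin r → ℝ) (hM : ∀ i j, 0 < M i j)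
    (η : ℝ) (hη0 : 0 < η) (hη1 : η ≤ 1) (hηM : ∀ i i' j, η * M i' j ≤ M i j)
    (z w : Fin r → ℝ) (Δ Δs : ℝ) (hΔ0 : 0 ≤ Δ) (hΔs : Δ ≤ Δs)
    (hzw : ∀ j j', (z j - w j) - (z j' - w j') ≤ Δ) (i i' : Fin q) :
    (Real.log (∑ j, M i j * Real.exp (z j)) - Real.log (∑ j, M i j * Real.exp (w j)))
      - (Real.log (∑ j, M i' j * Real.exp (z j)) - Real.log (∑ j, M i' j * Real.exp (w j)))
      ≤ (1 - η ^ 2 * Real.exp (-Δs)) * Δ := by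
  -- notation
  set A : Fin q → ℝ := fun i => ∑ j, M i j * Real.exp (z j) with hA
  set S : Fin q → ℝ := fun i => ∑ j, M i j * Real.exp (w j) with hS
  have hApos : ∀ i, 0 < A i := fun i => sk_sum_pos M hM _ (fun j => Real.exp_pos _) i
  have hSpos : ∀ i, 0 < S i := fun i => sk_sum_pos M hM _ (fun j => Real.exp_pos _) i
  -- the minimum of d = z - w
  obtain ⟨j₀, -, hj₀⟩ := Finset.exists_min_image Finset.univ (fun j => z j - w j) Finset.univ_nonempty
  set μ := z j₀ - w j₀ with hμ
  have hdlo : ∀ j, μ ≤ z j - w j := fun j => hj₀ j (Finset.mem_univ j)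
  have hdhi : ∀ j, z j - w j ≤ μ + Δ := fun j => by have := hzw j j₀; linarith
  -- key1 : exp μ * S i ≤ A i
  have key1 : ∀ i, Real.exp μ * S i ≤ A i := by
    intro i
    rw [hA, hS, Finset.mul_sum]
    refine Finset.sum_le_sum fun j _ => ?_
    have : Real.exp μ * Real.exp (w j) ≤ Real.exp (z j) := by
      rw [← Real.exp_add]; exact Real.exp_le_exp.mpr (by linarith [hdlo j])
    nlinarith [le_of_lt (hM i j)]
  have hterm : ∀ j, 0 ≤ Real.exp (w j) * (Real.exp (μ + Δ) - Real.exp (z j - w j)) := by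
    intro j
    have : Real.exp (z j - w j) ≤ Real.exp (μ + Δ) := Real.exp_le_exp.mpr (hdhi j)
    nlinarith [Real.exp_pos (w j)]
  have e1 : ∀ i, Real.exp (μ + Δ) * S i - A i = ∑ j, M i j * (Real.exp (w j) * (Real.exp (μ + Δ) - Real.exp (z j - w j))) := by
    intro i
    rw [hA, hS, Finset.mul_sum, ← Finset.sum_sub_distrib]
    refine Finset.sum_congr rfl fun j _ => ?_
    have h : Real.exp (w j) * Real.exp (z j - w j) = Real.exp (z j) := by
      rw [← Real.exp_add]; ring_nf
    linear_combination (M i j) * h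
  have key2nn : ∀ i, 0 ≤ Real.exp (μ + Δ) * S i - A i := by
    intro i
    rw [e1]
    exact Finset.sum_nonneg fun j _ => mul_nonneg (le_of_lt (hM i j)) (hterm j)
  -- key2a : exp (μ+Δ) * S i - A i ≥ η * (exp (μ+Δ) * S i' - A i')
  have key2a : ∀ i i', η * (Real.exp (μ + Δ) * S i' - A i') ≤ Real.exp (μ + Δ) * S i - A i := by
    intro i i'
    rw [e1, e1, Finset.mul_sum]
    refine Finset.sum_le_sum fun j _ => ?_
    calc η * (M i' j * (Real.exp (w j) * (Real.exp (μ + Δ) - Real.exp (z j - w j))))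
        = (η * M i' j) * (Real.exp (w j) * (Real.exp (μ + Δ) - Real.exp (z j - w j))) := by ring
      _ ≤ M i j * (Real.exp (w j) * (Real.exp (μ + Δ) - Real.exp (z j - w j))) :=
          mul_le_mul_of_nonneg_right (hηM i i' j) (hterm j)
  -- S i' ≥ η * S i
  have keyS : ∀ i i', η * S i ≤ S i' := by
    intro i i'
    rw [hS, Finset.mul_sum]
    refine Finset.sum_le_sum fun j _ => ?_
    calc η * (M i j * Real.exp (w j)) = (η * M i j) * Real.exp (w j) := by ring
      _ ≤ M i' j * Real.exp (w j) := mul_le_mul_of_nonneg_right (hηM i' i j) (le_of_lt (Real.exp_pos _))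
  -- combined:  A i * S i' ≤ ((1-η²) exp Δ + η²) * (A i' * S i)
  have key3 : A i * S i' ≤ ((1 - η ^ 2) * Real.exp Δ + η ^ 2) * (A i' * S i) := by
    have h2 : (η * (Real.exp (μ + Δ) * S i' - A i')) * (η * S i) ≤ (Real.exp (μ + Δ) * S i - A i) * S i' :=
      mul_le_mul (key2a i i') (keyS i i') (mul_nonneg (le_of_lt hη0) (le_of_lt (hSpos i))) (key2nn i)
    -- expand: A i * S i' ≤ exp(μ+Δ) S i S i' (1 - η²) + η² A i' S i
    have h4 : A i * S i' ≤ (1 - η ^ 2) * (Real.exp (μ + Δ) * (S i * S i')) + η ^ 2 * (A i' * S i) := by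
      nlinarith [h2]
    have h5 : Real.exp (μ + Δ) * (S i * S i') ≤ Real.exp Δ * (A i' * S i) := by
      have := key1 i'
      have hSipos := hSpos i
      have : Real.exp μ * S i' * S i ≤ A i' * S i := mul_le_mul_of_nonneg_right (key1 i') (le_of_lt hSipos)
      calc Real.exp (μ + Δ) * (S i * S i') = Real.exp Δ * (Real.exp μ * S i' * S i) := by
            rw [Real.exp_add]; ring
        _ ≤ Real.exp Δ * (A i' * S i) := mul_le_mul_of_nonneg_left this (le_of_lt (Real.exp_pos _))
    have hη2 : (0:ℝ) ≤ 1 - η ^ 2 := by nlinarith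
    nlinarith [mul_le_mul_of_nonneg_left h5 hη2]
  -- take logarithms
  have hcpos : 0 < (1 - η ^ 2) * Real.exp Δ + η ^ 2 := by
    have hη2 : (0:ℝ) ≤ 1 - η ^ 2 := by nlinarith
    nlinarith [Real.exp_pos Δ, sq_nonneg η, mul_nonneg hη2 (le_of_lt (Real.exp_pos Δ))]
  have hlog : Real.log (A i * S i') ≤ Real.log ((1 - η ^ 2) * Real.exp Δ + η ^ 2) + Real.log (A i' * S i) := by
    calc Real.log (A i * S i') ≤ Real.log (((1 - η ^ 2) * Real.exp Δ + η ^ 2) * (A i' * S i)) :=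
          Real.log_le_log (mul_pos (hApos i) (hSpos i')) key3
      _ = _ := Real.log_mul (ne_of_gt hcpos) (ne_of_gt (mul_pos (hApos i') (hSpos i)))
  have hfin : Real.log ((1 - η ^ 2) * Real.exp Δ + η ^ 2) ≤ (1 - η ^ 2 * Real.exp (-Δs)) * Δ := by
    have := sk_phi_le (t := η ^ 2) (by positivity) (by nlinarith) hΔ0 hΔs
    calc Real.log ((1 - η ^ 2) * Real.exp Δ + η ^ 2)
        ≤ Real.log (Real.exp ((1 - η ^ 2 * Real.exp (-Δs)) * Δ)) := Real.log_le_log hcpos this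
      _ = _ := Real.log_exp _
  have e1 : Real.log (A i * S i') = Real.log (A i) + Real.log (S i') :=
    Real.log_mul (ne_of_gt (hApos i)) (ne_of_gt (hSpos i'))
  have e2 : Real.log (A i' * S i) = Real.log (A i') + Real.log (S i) :=
    Real.log_mul (ne_of_gt (hApos i')) (ne_of_gt (hSpos i))
  rw [e1, e2] at hlog
  linarith

/-- One Sinkhorn step contracts pairwise oscillations. -/
lemma sk_F_contract {n m : ℕ} [NeZero n] [NeZero m]
    (K : Fin n → Fin m → ℝ) (hK : ∀ i j, 0 < K i j) (b : Fin m → ℝ) (hb : ∀ j, 0 < b j)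
    (a : Fin n → ℝ)
    (η : ℝ) (hη0 : 0 < η) (hη1 : η ≤ 1) (hηK : ∀ i i' j j', η * K i' j' ≤ K i j)
    (x y : Fin n → ℝ) (Δ Δs : ℝ) (hΔ0 : 0 ≤ Δ) (hΔs : Δ ≤ Δs)
    (hxy : ∀ i i', (x i - y i) - (x i' - y i') ≤ Δ) (i i' : Fin n) :
    ((Real.log (a i) - Real.log (∑ j, K i j * (b j / ∑ i'', K i'' j * Real.exp (x i''))))
      - (Real.log (a i) - Real.log (∑ j, K i j * (b j / ∑ i'', K i'' j * Real.exp (y i'')))))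
    - ((Real.log (a i') - Real.log (∑ j, K i' j * (b j / ∑ i'', K i'' j * Real.exp (x i''))))
      - (Real.log (a i') - Real.log (∑ j, K i' j * (b j / ∑ i'', K i'' j * Real.exp (y i'')))))
      ≤ (1 - η ^ 2 * Real.exp (-Δs)) * Δ := by
  set S : (Fin n → ℝ) → Fin m → ℝ := fun v j => ∑ i'', K i'' j * Real.exp (v i'') with hSdef
  have hSpos : ∀ v j, 0 < S v j := fun v j =>
    Finset.sum_pos (fun i _ => mul_pos (hK i j) (Real.exp_pos _)) Finset.univ_nonempty
  set u : (Fin n → ℝ) → Fin m → ℝ := fun v j => Real.log (b j) - Real.log (S v j) with hudef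
  have hexpu : ∀ v j, Real.exp (u v j) = b j / S v j := by
    intro v j
    rw [hudef]
    rw [Real.exp_sub, Real.exp_log (hb j), Real.exp_log (hSpos v j)]
  have hsum : ∀ (v : Fin n → ℝ) (i : Fin n),
      ∑ j, K i j * (b j / ∑ i'', K i'' j * Real.exp (v i'')) = ∑ j, K i j * Real.exp (u v j) := by
    intro v i
    exact Finset.sum_congr rfl fun j _ => by rw [hexpu v j]
  -- pairwise bound on (u y) - (u x)
  obtain ⟨i₀, -, hi₀⟩ := Finset.exists_min_image Finset.univ (fun i => x i - y i) Finset.univ_nonempty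
  set μ := x i₀ - y i₀ with hμ
  have hzw : ∀ j j', (u y j - u x j) - (u y j' - u x j') ≤ Δ := by
    intro j j'
    have h1 : Real.log (S x j) ≤ Real.log (S y j) + (μ + Δ) := by
      refine sk_lse_le (fun j i => K i j) (fun j i => hK i j) x y (μ + Δ) (fun i => ?_) j
      have := hxy i i₀; simp only [hμ]; linarith
    have h2 : Real.log (S y j') ≤ Real.log (S x j') + (-μ) := by
      refine sk_lse_le (fun j i => K i j) (fun j i => hK i j) y x (-μ) (fun i => ?_) j'
      have := hi₀ i (Finset.mem_univ i); simp only [hμ] at *; linarith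
    have e : ∀ v j, u v j = Real.log (b j) - Real.log (S v j) := fun v j => rfl
    rw [e, e, e, e]
    linarith
  have H := sk_lse_contract K hK η hη0 hη1 (fun i i' j => hηK i i' j j) (u y) (u x) Δ Δs hΔ0 hΔs hzw i i'
  rw [hsum x i, hsum y i, hsum x i', hsum y i']
  linarith [H]

/-- Oscillation bound on the output of a Sinkhorn step. -/
lemma sk_F_osc {n m : ℕ} [NeZero n] [NeZero m]
    (K : Fin n → Fin m → ℝ) (hK : ∀ i j, 0 < K i j) (b : Fin m → ℝ) (hb : ∀ j, 0 < b j)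
    (a : Fin n → ℝ)
    (η : ℝ) (hη0 : 0 < η) (hηK : ∀ i i' j j', η * K i' j' ≤ K i j)
    (x : Fin n → ℝ) (i i' : Fin n) :
    (Real.log (a i) - Real.log (∑ j, K i j * (b j / ∑ i'', K i'' j * Real.exp (x i''))))
    - (Real.log (a i') - Real.log (∑ j, K i' j * (b j / ∑ i'', K i'' j * Real.exp (x i''))))
      ≤ (Real.log (a i) - Real.log (a i')) - Real.log η := by
  have hSpos : ∀ j, 0 < ∑ i'', K i'' j * Real.exp (x i'') := fun j =>
    Finset.sum_pos (fun i _ => mul_pos (hK i j) (Real.exp_pos _)) Finset.univ_nonempty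
  have hTpos : ∀ i, 0 < ∑ j, K i j * (b j / ∑ i'', K i'' j * Real.exp (x i'')) := fun i =>
    Finset.sum_pos (fun j _ => mul_pos (hK i j) (div_pos (hb j) (hSpos j))) Finset.univ_nonempty
  have hle : η * ∑ j, K i' j * (b j / ∑ i'', K i'' j * Real.exp (x i''))
      ≤ ∑ j, K i j * (b j / ∑ i'', K i'' j * Real.exp (x i'')) := by
    rw [Finset.mul_sum]
    refine Finset.sum_le_sum fun j _ => ?_
    have hq : 0 ≤ b j / ∑ i'', K i'' j * Real.exp (x i'') := le_of_lt (div_pos (hb j) (hSpos j))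
    calc η * (K i' j * (b j / ∑ i'', K i'' j * Real.exp (x i'')))
        = (η * K i' j) * (b j / ∑ i'', K i'' j * Real.exp (x i'')) := by ring
      _ ≤ K i j * (b j / ∑ i'', K i'' j * Real.exp (x i'')) :=
          mul_le_mul_of_nonneg_right (hηK i i' j j) hq
  have hlog : Real.log η + Real.log (∑ j, K i' j * (b j / ∑ i'', K i'' j * Real.exp (x i'')))
      ≤ Real.log (∑ j, K i j * (b j / ∑ i'', K i'' j * Real.exp (x i''))) := by
    rw [← Real.log_mul (ne_of_gt hη0) (ne_of_gt (hTpos i'))]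
    exact Real.log_le_log (mul_pos hη0 (hTpos i')) hle
  linarith

/-- The sup-norm of a centered vector is bounded by any pairwise-oscillation bound. -/
lemma sk_centered_norm_le {n : ℕ} (hn : 0 < n) (w : Fin n → ℝ) (E : ℝ) (hE : 0 ≤ E)
    (h : ∀ i i', w i - w i' ≤ E) (v : Fin n → ℝ) (hv : ∀ i, v i = w i - (∑ i', w i') / n) :
    ‖v‖ ≤ E := by
  have hn' : (0:ℝ) < n := by exact_mod_cast hn
  rw [pi_norm_le_iff_of_nonneg hE]
  intro i
  rw [Real.norm_eq_abs, abs_le, hv i]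
  constructor
  · have h1 : ∑ i', w i' ≤ ∑ _i' : Fin n, (w i + E) := Finset.sum_le_sum fun i' _ => by linarith [h i' i]
    rw [Finset.sum_const, Finset.card_univ, Fintype.card_fin, nsmul_eq_mul] at h1
    have h2 : (∑ i', w i') / n ≤ w i + E := by rw [div_le_iff₀ hn']; linarith
    linarith
  · have h1 : ∑ _i' : Fin n, (w i - E) ≤ ∑ i', w i' := Finset.sum_le_sum fun i' _ => by linarith [h i i']
    rw [Finset.sum_const, Finset.card_univ, Fintype.card_fin, nsmul_eq_mul] at h1
    have h2 : w i - E ≤ (∑ i', w i') / n := by rw [le_div_iff₀ hn']; linarith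
    linarith

set_option maxHeartbeats 2000000 in
/-- Local (locally uniform) linear convergence of the centered Sinkhorn iterates:
there is a fixed-point map `x̄` of `F(·, θ)` with `θ ↦ L_center (x̄ θ)` continuous,
and continuous `c : Ω → ℝ_{>0}`, `ρ : Ω → (0,1)` such that for all `k` and `θ ∈ Ω`,
`‖L_center (x_k θ) - L_center (x̄ θ)‖_∞ ≤ c θ * (ρ θ)^k`. -/
theorem sinkhorn_centered_iterates_linear_convergence
    (n m p : ℕ) (hn : 0 < n) (hm : 0 < m) (hp : 0 < p)
    (Ω : Set (Fin p → ℝ)) (hΩ_open : IsOpen Ω) (hΩ_conn : IsConnected Ω)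
    (C : (Fin p → ℝ) → Fin n → Fin m → ℝ)
    (a : (Fin p → ℝ) → Fin n → ℝ) (b : (Fin p → ℝ) → Fin m → ℝ)
    (ε : (Fin p → ℝ) → ℝ) (x₀ : (Fin p → ℝ) → Fin n → ℝ)
    (hC : ContDiffOn ℝ 2 C Ω) (ha : ContDiffOn ℝ 2 a Ω)
    (hb : ContDiffOn ℝ 2 b Ω) (hε : ContDiffOn ℝ 2 ε Ω)
    (hx₀ : ContDiffOn ℝ 2 x₀ Ω)
    (ha_pos : ∀ θ ∈ Ω, ∀ i, 0 < a θ i) (ha_sum : ∀ θ ∈ Ω, ∑ i, a θ i = 1)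
    (hb_pos : ∀ θ ∈ Ω, ∀ j, 0 < b θ j) (hb_sum : ∀ θ ∈ Ω, ∑ j, b θ j = 1)
    (hε_pos : ∀ θ ∈ Ω, 0 < ε θ)
    (K : (Fin p → ℝ) → Fin n → Fin m → ℝ)
    (hK : ∀ θ i j, K θ i j = Real.exp (-(C θ i j) / ε θ))
    (F : (Fin n → ℝ) → (Fin p → ℝ) → Fin n → ℝ)
    (hF : ∀ x θ i, F x θ i = Real.log (a θ i) -
      Real.log (∑ j, K θ i j * (b θ j / ∑ i', K θ i' j * Real.exp (x i'))))
    (x : ℕ → (Fin p → ℝ) → Fin n → ℝ)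
    (hx_zero : ∀ θ ∈ Ω, x 0 θ = x₀ θ)
    (hx_rec : ∀ k, ∀ θ ∈ Ω, x (k + 1) θ = F (x k θ) θ)
    (Lc : (Fin n → ℝ) → Fin n → ℝ)
    (hLc : ∀ y i, Lc y i = y i - (∑ i', y i') / n) :
    ∃ xbar : (Fin p → ℝ) → Fin n → ℝ,
      (∀ θ ∈ Ω, F (xbar θ) θ = xbar θ) ∧
      ContinuousOn (fun θ => Lc (xbar θ)) Ω ∧
      ∃ c ρ : (Fin p → ℝ) → ℝ,
        ContinuousOn c Ω ∧ ContinuousOn ρ Ω ∧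
        (∀ θ ∈ Ω, 0 < c θ) ∧ (∀ θ ∈ Ω, ρ θ ∈ Set.Ioo (0 : ℝ) 1) ∧
        ∀ k : ℕ, ∀ θ ∈ Ω, ‖Lc (x k θ) - Lc (xbar θ)‖ ≤ c θ * ρ θ ^ k := by
  classical
  haveI : NeZero n := ⟨hn.ne'⟩
  haveI : NeZero m := ⟨hm.ne'⟩
  haveI hNn : Nonempty (Fin n) := Fin.pos_iff_nonempty.mp hn
  haveI hNm : Nonempty (Fin m) := Fin.pos_iff_nonempty.mp hm
  have hnR : (0:ℝ) < n := by exact_mod_cast hn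
  -- positivity of K everywhere
  have hKpos : ∀ θ i j, 0 < K θ i j := fun θ i j => by rw [hK]; exact Real.exp_pos _
  -- min and max entries of K
  set Kmin : (Fin p → ℝ) → ℝ :=
    fun θ => Finset.univ.inf' Finset.univ_nonempty (fun q : Fin n × Fin m => K θ q.1 q.2) with hKmin_def
  set Kmax : (Fin p → ℝ) → ℝ :=
    fun θ => Finset.univ.sup' Finset.univ_nonempty (fun q : Fin n × Fin m => K θ q.1 q.2) with hKmax_def
  have hKmin_le : ∀ θ i j, Kmin θ ≤ K θ i j := fun θ i j =>
    Finset.inf'_le _ (Finset.mem_univ (⟨i, j⟩ : Fin n × Fin m))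
  have hle_Kmax : ∀ θ i j, K θ i j ≤ Kmax θ := by
    intro θ i j
    simp only [hKmax_def]
    exact Finset.le_sup' (fun q : Fin n × Fin m => K θ q.1 q.2) (Finset.mem_univ (⟨i, j⟩ : Fin n × Fin m))
  have hKmin_pos : ∀ θ, 0 < Kmin θ := by
    intro θ
    rw [hKmin_def]
    exact (Finset.lt_inf'_iff _).mpr fun q _ => hKpos θ q.1 q.2
  have hKmax_pos : ∀ θ, 0 < Kmax θ := fun θ =>
    lt_of_lt_of_le (hKmin_pos θ) (le_trans (hKmin_le θ (Classical.arbitrary _) (Classical.arbitrary _))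
      (hle_Kmax θ _ _))
  have hKminmax : ∀ θ, Kmin θ ≤ Kmax θ := fun θ =>
    le_trans (hKmin_le θ (Classical.arbitrary _) (Classical.arbitrary _)) (hle_Kmax θ _ _)
  set η : (Fin p → ℝ) → ℝ := fun θ => Kmin θ / Kmax θ with hη_def
  have hη0 : ∀ θ, 0 < η θ := fun θ => div_pos (hKmin_pos θ) (hKmax_pos θ)
  have hη1 : ∀ θ, η θ ≤ 1 := fun θ => div_le_one_of_le₀ (hKminmax θ) (le_of_lt (hKmax_pos θ))
  have hηK : ∀ θ i i' j j', η θ * K θ i' j' ≤ K θ i j := by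
    intro θ i i' j j'
    have h1 : η θ * K θ i' j' ≤ η θ * Kmax θ :=
      mul_le_mul_of_nonneg_left (hle_Kmax θ i' j') (le_of_lt (hη0 θ))
    have h2 : η θ * Kmax θ = Kmin θ := div_mul_cancel₀ _ (ne_of_gt (hKmax_pos θ))
    linarith [hKmin_le θ i j]
  -- oscillation of log a and of x₀
  set La : (Fin p → ℝ) → ℝ := fun θ => Finset.univ.sup' Finset.univ_nonempty
    (fun q : Fin n × Fin n => Real.log (a θ q.1) - Real.log (a θ q.2)) with hLa_def
  set Ox : (Fin p → ℝ) → ℝ := fun θ => Finset.univ.sup' Finset.univ_nonempty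
    (fun q : Fin n × Fin n => x₀ θ q.1 - x₀ θ q.2) with hOx_def
  have hLa_pair : ∀ θ i i', Real.log (a θ i) - Real.log (a θ i') ≤ La θ := by
    intro θ i i'
    simp only [hLa_def]
    exact Finset.le_sup' (fun q : Fin n × Fin n => Real.log (a θ q.1) - Real.log (a θ q.2))
      (Finset.mem_univ (⟨i, i'⟩ : Fin n × Fin n))
  have hOx_pair : ∀ θ i i', x₀ θ i - x₀ θ i' ≤ Ox θ := by
    intro θ i i'
    simp only [hOx_def]
    exact Finset.le_sup' (fun q : Fin n × Fin n => x₀ θ q.1 - x₀ θ q.2)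
      (Finset.mem_univ (⟨i, i'⟩ : Fin n × Fin n))
  have hLa0 : ∀ θ, 0 ≤ La θ := fun θ => by
    have := hLa_pair θ (Classical.arbitrary _) (Classical.arbitrary _); linarith
  have hOx0 : ∀ θ, 0 ≤ Ox θ := fun θ => by
    have := hOx_pair θ (Classical.arbitrary _) (Classical.arbitrary _); linarith
  set B : (Fin p → ℝ) → ℝ := fun θ => La θ + (Real.log (Kmax θ) - Real.log (Kmin θ)) with hB_def
  have hB0 : ∀ θ, 0 ≤ B θ := by
    intro θ
    have := Real.log_le_log (hKmin_pos θ) (hKminmax θ)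
    have := hLa0 θ
    simp only [hB_def]
    linarith
  have hlogη : ∀ θ, Real.log (η θ) = Real.log (Kmin θ) - Real.log (Kmax θ) := fun θ =>
    Real.log_div (ne_of_gt (hKmin_pos θ)) (ne_of_gt (hKmax_pos θ))
  set Ds : (Fin p → ℝ) → ℝ := fun θ => 2 * B θ + 2 with hDs_def
  set ρ : (Fin p → ℝ) → ℝ := fun θ => 1 - η θ ^ 2 * Real.exp (-Ds θ) with hρ_def
  have hρ01 : ∀ θ, ρ θ ∈ Set.Ioo (0:ℝ) 1 := by
    intro θ
    constructor
    · have h1 : η θ ^ 2 ≤ 1 := by nlinarith [hη0 θ, hη1 θ]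
      have h2 : Real.exp (-Ds θ) < 1 := by
        rw [Real.exp_lt_one_iff]
        have := hB0 θ
        simp only [hDs_def]
        linarith
      have h3 : (0:ℝ) < Real.exp (-Ds θ) := Real.exp_pos _
      simp only [hρ_def]
      nlinarith
    · have : 0 < η θ ^ 2 * Real.exp (-Ds θ) := mul_pos (pow_pos (hη0 θ) 2) (Real.exp_pos _)
      simp only [hρ_def]; linarith
  set C₀ : (Fin p → ℝ) → ℝ := fun θ => (Ox θ + 2 * B θ + 1) / ρ θ with hC₀_def
  set c : (Fin p → ℝ) → ℝ := fun θ => C₀ θ / (1 - ρ θ) with hc_def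
  have hC₀pos : ∀ θ, 0 < C₀ θ := fun θ => div_pos (by nlinarith [hOx0 θ, hB0 θ]) (hρ01 θ).1
  have hcpos : ∀ θ, 0 < c θ := fun θ => div_pos (hC₀pos θ) (by linarith [(hρ01 θ).2])
  -- oscillation bound for the iterates x (k+1)
  have hx_osc : ∀ θ ∈ Ω, ∀ k, ∀ i i', x (k+1) θ i - x (k+1) θ i' ≤ B θ := by
    intro θ hθ k i i'
    rw [hx_rec k θ hθ, hF, hF]
    have h := sk_F_osc (K θ) (hKpos θ) (b θ) (hb_pos θ hθ) (a θ) (η θ) (hη0 θ) (hηK θ)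
      (x k θ) i i'
    have := hLa_pair θ i i'
    rw [hlogη θ] at h
    simp only [hB_def]
    linarith
  -- geometric decay of consecutive oscillations
  have hd : ∀ θ ∈ Ω, ∀ j, ∀ i i',
      (x (j+2) θ i - x (j+1) θ i) - (x (j+2) θ i' - x (j+1) θ i') ≤ 2 * B θ * ρ θ ^ j := by
    intro θ hθ j
    induction j with
    | zero =>
      intro i i'
      have h1 := hx_osc θ hθ 1 i i'
      have h2 := hx_osc θ hθ 0 i' i
      simp only [pow_zero, mul_one]
      linarith
    | succ j ih =>
      intro i i'
      have hΔ0 : 0 ≤ 2 * B θ * ρ θ ^ j := by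
        have := hB0 θ; have := (hρ01 θ).1; positivity
      have hΔs : 2 * B θ * ρ θ ^ j ≤ Ds θ := by
        have hpow : ρ θ ^ j ≤ 1 := pow_le_one₀ (le_of_lt (hρ01 θ).1) (le_of_lt (hρ01 θ).2)
        have := hB0 θ
        simp only [hDs_def]
        nlinarith
      have h := sk_F_contract (K θ) (hKpos θ) (b θ) (hb_pos θ hθ) (a θ) (η θ) (hη0 θ) (hη1 θ)
        (hηK θ) (x (j+2) θ) (x (j+1) θ) (2 * B θ * ρ θ ^ j) (Ds θ) hΔ0 hΔs ih i i'
      rw [← hF, ← hF, ← hF, ← hF, ← hx_rec (j+2) θ hθ, ← hx_rec (j+1) θ hθ] at h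
      calc (x (j+1+2) θ i - x (j+1+1) θ i) - (x (j+1+2) θ i' - x (j+1+1) θ i')
          ≤ (1 - η θ ^ 2 * Real.exp (-Ds θ)) * (2 * B θ * ρ θ ^ j) := by
            have e2 : j+1+2 = j+2+1 := by ring
            have e3 : j+1+1 = j+2 := by ring
            rw [e2, e3]
            linarith [h]
        _ = 2 * B θ * ρ θ ^ (j+1) := by simp only [hρ_def]; ring
  have hd0 : ∀ θ ∈ Ω, ∀ i i', (x 1 θ i - x 0 θ i) - (x 1 θ i' - x 0 θ i') ≤ Ox θ + B θ := by
    intro θ hθ i i'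
    have h1 : x 1 θ i - x 1 θ i' ≤ B θ := by simpa using hx_osc θ hθ 0 i i'
    have h2 := hOx_pair θ i' i
    rw [hx_zero θ hθ]
    linarith
  set z : ℕ → (Fin p → ℝ) → Fin n → ℝ := fun k θ => Lc (x k θ) with hz_def
  have hC₀ρ : ∀ θ, C₀ θ * ρ θ = Ox θ + 2 * B θ + 1 := by
    intro θ
    simp only [hC₀_def]
    exact div_mul_cancel₀ _ (ne_of_gt (hρ01 θ).1)
  have hC₀ge : ∀ θ, Ox θ + 2 * B θ + 1 ≤ C₀ θ := by
    intro θ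
    have h := hC₀ρ θ
    nlinarith [hC₀pos θ, (hρ01 θ).2, mul_nonneg (le_of_lt (hC₀pos θ)) (sub_nonneg.mpr (le_of_lt (hρ01 θ).2))]
  have hzdiff : ∀ (u v : Fin n → ℝ) (i : Fin n),
      (Lc u - Lc v) i = (u i - v i) - (∑ i', (u i' - v i')) / n := by
    intro u v i
    have : ∑ i', (u i' - v i') = (∑ i', u i') - (∑ i', v i') := Finset.sum_sub_distrib _ _
    rw [Pi.sub_apply, hLc, hLc, this]
    ring
  have hzdist : ∀ θ ∈ Ω, ∀ k, dist (z k θ) (z (k+1) θ) ≤ C₀ θ * ρ θ ^ k := by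
    intro θ hθ k
    rw [dist_eq_norm]
    have hE : 0 ≤ C₀ θ * ρ θ ^ k :=
      mul_nonneg (le_of_lt (hC₀pos θ)) (pow_nonneg (le_of_lt (hρ01 θ).1) k)
    refine sk_centered_norm_le hn (fun i => x k θ i - x (k+1) θ i) _ hE ?_
      (z k θ - z (k+1) θ) (fun i => hzdiff (x k θ) (x (k+1) θ) i)
    intro i i'
    show x k θ i - x (k+1) θ i - (x k θ i' - x (k+1) θ i') ≤ C₀ θ * ρ θ ^ k
    cases k with
    | zero =>
      have h : x 1 θ i' - x 0 θ i' - (x 1 θ i - x 0 θ i) ≤ Ox θ + B θ := hd0 θ hθ i' i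
      have h2 := hC₀ge θ
      have h3 := hB0 θ
      simp only [pow_zero, mul_one]
      linarith
    | succ j =>
      have e : j+1+1 = j+2 := by omega
      rw [e]
      have h := hd θ hθ j i' i
      have h2 : 2 * B θ * ρ θ ^ j ≤ C₀ θ * ρ θ ^ (j+1) := by
        have h3 : 2 * B θ ≤ C₀ θ * ρ θ := by rw [hC₀ρ θ]; linarith [hOx0 θ]
        calc 2 * B θ * ρ θ ^ j ≤ (C₀ θ * ρ θ) * ρ θ ^ j :=
              mul_le_mul_of_nonneg_right h3 (pow_nonneg (le_of_lt (hρ01 θ).1) j)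
          _ = C₀ θ * ρ θ ^ (j+1) := by ring
      linarith
  have hcauchy : ∀ θ ∈ Ω, ∃ zb, Filter.Tendsto (fun k => z k θ) Filter.atTop (nhds zb) := by
    intro θ hθ
    exact cauchySeq_tendsto_of_complete
      (cauchySeq_of_le_geometric (ρ θ) (C₀ θ) (hρ01 θ).2 (hzdist θ hθ))
  choose zb hzb using hcauchy
  set xbar : (Fin p → ℝ) → Fin n → ℝ := fun θ => if h : θ ∈ Ω then zb θ h else 0 with hxbar_def
  have hxlim : ∀ θ, ∀ hθ : θ ∈ Ω, Filter.Tendsto (fun k => z k θ) Filter.atTop (nhds (xbar θ)) := by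
    intro θ hθ
    simp only [hxbar_def, dif_pos hθ]
    exact hzb θ hθ
  have hdistb : ∀ θ ∈ Ω, ∀ k, dist (z k θ) (xbar θ) ≤ C₀ θ * ρ θ ^ k / (1 - ρ θ) := fun θ hθ k =>
    dist_le_of_le_geometric_of_tendsto (ρ θ) (C₀ θ) (hρ01 θ).2 (hzdist θ hθ) (hxlim θ hθ) k
  have hLcsum : ∀ y : Fin n → ℝ, ∑ i, Lc y i = 0 := by
    intro y
    have : ∀ i : Fin n, Lc y i = y i - (∑ i', y i') / n := fun i => hLc y i
    rw [Finset.sum_congr rfl fun i _ => this i, Finset.sum_sub_distrib, Finset.sum_const,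
      Finset.card_univ, Fintype.card_fin, nsmul_eq_mul]
    field_simp
    ring
  have hcs : Continuous (fun y : Fin n → ℝ => ∑ i, y i) :=
    continuous_finset_sum _ (fun i _ => continuous_apply i)
  have hsumbar : ∀ θ ∈ Ω, ∑ i, xbar θ i = 0 := by
    intro θ hθ
    have h1 : Filter.Tendsto (fun k => ∑ i, z k θ i) Filter.atTop (nhds (∑ i, xbar θ i)) :=
      (hcs.tendsto (xbar θ)).comp (hxlim θ hθ)
    have h2 : (fun k => ∑ i, z k θ i) = fun _ => (0:ℝ) := by
      funext k
      simp only [hz_def]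
      exact hLcsum (x k θ)
    rw [h2] at h1
    exact tendsto_nhds_unique h1 tendsto_const_nhds
  have hLcbar : ∀ θ ∈ Ω, Lc (xbar θ) = xbar θ := by
    intro θ hθ
    funext i
    rw [hLc, hsumbar θ hθ]
    simp
  have hmain : ∀ k, ∀ θ ∈ Ω, ‖Lc (x k θ) - Lc (xbar θ)‖ ≤ c θ * ρ θ ^ k := by
    intro k θ hθ
    rw [hLcbar θ hθ, ← dist_eq_norm]
    have h := hdistb θ hθ k
    have he : C₀ θ * ρ θ ^ k / (1 - ρ θ) = c θ * ρ θ ^ k := by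
      have h2 : (1:ℝ) - ρ θ ≠ 0 := ne_of_gt (by linarith [(hρ01 θ).2])
      simp only [hc_def]
      field_simp
    rw [he] at h
    exact h
  have hnne : (n:ℝ) ≠ 0 := ne_of_gt hnR
  -- the fixed point property
  have hfix : ∀ θ ∈ Ω, F (xbar θ) θ = xbar θ := by
    intro θ hθ
    -- shift equivariance of F
    have hFshift : ∀ (v : Fin n → ℝ) (t : ℝ) (i : Fin n),
        F (fun i' => v i' + t) θ i = F v θ i + t := by
      intro v t i
      rw [hF, hF]
      have hSv : ∀ j, (0:ℝ) < ∑ i', K θ i' j * Real.exp (v i') := fun j =>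
        Finset.sum_pos (fun i' _ => mul_pos (hKpos θ i' j) (Real.exp_pos _)) Finset.univ_nonempty
      have hTv : (0:ℝ) < ∑ j, K θ i j * (b θ j / ∑ i', K θ i' j * Real.exp (v i')) :=
        Finset.sum_pos (fun j _ => mul_pos (hKpos θ i j)
          (div_pos (hb_pos θ hθ j) (hSv j))) Finset.univ_nonempty
      have h1 : ∀ j, ∑ i', K θ i' j * Real.exp (v i' + t)
          = Real.exp t * ∑ i', K θ i' j * Real.exp (v i') := by
        intro j
        rw [Finset.mul_sum]
        exact Finset.sum_congr rfl fun i' _ => by rw [Real.exp_add]; ring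
      have h2 : ∑ j, K θ i j * (b θ j / ∑ i', K θ i' j * Real.exp (v i' + t))
          = Real.exp (-t) * ∑ j, K θ i j * (b θ j / ∑ i', K θ i' j * Real.exp (v i')) := by
        rw [Finset.mul_sum]
        refine Finset.sum_congr rfl fun j _ => ?_
        rw [h1 j, Real.exp_neg]
        rw [div_mul_eq_div_div_swap]
        field_simp
      rw [h2, Real.log_mul (Real.exp_ne_zero _) (ne_of_gt hTv), Real.log_exp]
      ring
    -- continuity of the centered step map
    have hSc : ∀ j, Continuous (fun v : Fin n → ℝ => ∑ i', K θ i' j * Real.exp (v i')) := fun j =>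
      continuous_finset_sum _ fun i' _ =>
        continuous_const.mul (Real.continuous_exp.comp (continuous_apply i'))
    have hSvpos : ∀ (v : Fin n → ℝ) j, (0:ℝ) < ∑ i', K θ i' j * Real.exp (v i') := fun v j =>
      Finset.sum_pos (fun i' _ => mul_pos (hKpos θ i' j) (Real.exp_pos _)) Finset.univ_nonempty
    have hTva : ∀ (v : Fin n → ℝ) i, (0:ℝ) < ∑ j, K θ i j * (b θ j / ∑ i', K θ i' j * Real.exp (v i')) :=
      fun v i => Finset.sum_pos (fun j _ => mul_pos (hKpos θ i j)
        (div_pos (hb_pos θ hθ j) (hSvpos v j))) Finset.univ_nonempty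
    have hTc : ∀ i, Continuous (fun v : Fin n → ℝ =>
        ∑ j, K θ i j * (b θ j / ∑ i', K θ i' j * Real.exp (v i'))) := fun i =>
      continuous_finset_sum _ fun j _ =>
        continuous_const.mul (continuous_const.div (hSc j) (fun v => ne_of_gt (hSvpos v j)))
    have hΦc : Continuous (fun v : Fin n → ℝ => Lc (F v θ)) := by
      have e1 : (fun y : Fin n → ℝ => Lc y) = fun y : Fin n → ℝ => (fun i => y i - (∑ i', y i') / n) := by
        funext y i; exact hLc y i
      have e2 : (fun v : Fin n → ℝ => F v θ) = fun v => (fun i => Real.log (a θ i) -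
          Real.log (∑ j, K θ i j * (b θ j / ∑ i', K θ i' j * Real.exp (v i')))) := by
        funext v i; exact hF v θ i
      show Continuous ((fun y : Fin n → ℝ => Lc y) ∘ (fun v : Fin n → ℝ => F v θ))
      rw [e1, e2]
      refine Continuous.comp ?_ ?_
      · exact continuous_pi fun i => (continuous_apply i).sub
          ((continuous_finset_sum _ fun i' _ => continuous_apply i').div_const _)
      · exact continuous_pi fun i => continuous_const.sub
          ((hTc i).log (fun v => ne_of_gt (hTva v i)))
    -- passing to the limit in the recursion
    have hz_rec : ∀ k, z (k+1) θ = Lc (F (z k θ) θ) := by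
      intro k
      have hxk : x k θ = fun i => z k θ i + (∑ i', x k θ i') / n := by
        funext i; simp only [hz_def]; rw [hLc]; ring
      have hs : ∀ i, F (x k θ) θ i = F (z k θ) θ i + (∑ i', x k θ i') / n := by
        intro i
        conv_lhs => rw [hxk]
        exact hFshift (z k θ) _ i
      have e3 : z (k+1) θ = Lc (F (x k θ) θ) := by
        simp only [hz_def]; rw [hx_rec k θ hθ]
      rw [e3]
      funext i
      rw [hLc, hLc, hs i, Finset.sum_congr rfl fun i' _ => hs i', Finset.sum_add_distrib,
        Finset.sum_const, Finset.card_univ, Fintype.card_fin, nsmul_eq_mul]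
      field_simp
      ring
    have h1 : Filter.Tendsto (fun k => z (k+1) θ) Filter.atTop (nhds (xbar θ)) :=
      (hxlim θ hθ).comp (Filter.tendsto_add_atTop_nat 1)
    have h2 : Filter.Tendsto (fun k => Lc (F (z k θ) θ)) Filter.atTop (nhds (Lc (F (xbar θ) θ))) :=
      (hΦc.tendsto (xbar θ)).comp (hxlim θ hθ)
    have h3 : (fun k => z (k+1) θ) = fun k => Lc (F (z k θ) θ) := funext hz_rec
    rw [h3] at h1
    have hfixc : Lc (F (xbar θ) θ) = xbar θ := tendsto_nhds_unique h2 h1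
    -- the mean of the fixed equation vanishes
    have hgz : ∀ i, F (xbar θ) θ i = xbar θ i + (∑ i', F (xbar θ) θ i') / n := by
      intro i
      have h4 := congrFun hfixc i
      rw [hLc] at h4
      linarith
    have hTpos : ∀ i, 0 < ∑ j, K θ i j * (b θ j / ∑ i', K θ i' j * Real.exp (xbar θ i')) :=
      fun i => hTva (xbar θ) i
    have hgi : ∀ i, Real.exp (F (xbar θ) θ i)
        * (∑ j, K θ i j * (b θ j / ∑ i', K θ i' j * Real.exp (xbar θ i'))) = a θ i := by
      intro i
      rw [hF (xbar θ) θ i, Real.exp_sub, Real.exp_log (ha_pos θ hθ i), Real.exp_log (hTpos i)]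
      exact div_mul_cancel₀ _ (ne_of_gt (hTpos i))
    have hsum1 : ∑ i, Real.exp (xbar θ i)
        * (∑ j, K θ i j * (b θ j / ∑ i', K θ i' j * Real.exp (xbar θ i'))) = 1 := by
      have e4 : ∑ i, Real.exp (xbar θ i)
            * (∑ j, K θ i j * (b θ j / ∑ i', K θ i' j * Real.exp (xbar θ i')))
          = ∑ j, (b θ j / ∑ i', K θ i' j * Real.exp (xbar θ i'))
            * ∑ i, K θ i j * Real.exp (xbar θ i) := by
        simp only [Finset.mul_sum]
        rw [Finset.sum_comm]
        refine Finset.sum_congr rfl fun j _ => ?_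
        exact Finset.sum_congr rfl fun i _ => by ring
      rw [e4]
      have e5 : ∀ j, (b θ j / ∑ i', K θ i' j * Real.exp (xbar θ i'))
          * ∑ i, K θ i j * Real.exp (xbar θ i) = b θ j := fun j =>
        div_mul_cancel₀ _ (ne_of_gt (hSvpos (xbar θ) j))
      rw [Finset.sum_congr rfl fun j _ => e5 j]
      exact hb_sum θ hθ
    have hes : Real.exp ((∑ i', F (xbar θ) θ i') / n) = 1 := by
      have h4 : ∑ i, Real.exp (F (xbar θ) θ i)
          * (∑ j, K θ i j * (b θ j / ∑ i', K θ i' j * Real.exp (xbar θ i'))) = 1 := by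
        rw [Finset.sum_congr rfl fun i _ => hgi i]
        exact ha_sum θ hθ
      have h5 : ∑ i, Real.exp (F (xbar θ) θ i)
            * (∑ j, K θ i j * (b θ j / ∑ i', K θ i' j * Real.exp (xbar θ i')))
          = Real.exp ((∑ i', F (xbar θ) θ i') / n) * ∑ i, Real.exp (xbar θ i)
            * (∑ j, K θ i j * (b θ j / ∑ i', K θ i' j * Real.exp (xbar θ i'))) := by
        rw [Finset.mul_sum]
        refine Finset.sum_congr rfl fun i _ => ?_
        rw [hgz i, Real.exp_add]
        ring
      rw [h4, hsum1, mul_one] at h5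
      exact h5.symm
    have hs0 : (∑ i', F (xbar θ) θ i') / n = 0 := by
      have h6 := congrArg Real.log hes
      rwa [Real.log_exp, Real.log_one] at h6
    funext i
    rw [hgz i, hs0, add_zero]
  -- continuity in θ of all the data
  have hKc : ∀ i j, ContinuousOn (fun θ => K θ i j) Ω := by
    intro i j
    have he : (fun θ => K θ i j) = fun θ => Real.exp (-C θ i j / ε θ) := by
      funext θ; exact hK θ i j
    rw [he]
    exact Real.continuous_exp.comp_continuousOn
      (ContinuousOn.div
        (ContinuousOn.neg ((continuous_apply j).comp_continuousOn
          ((continuous_apply i).comp_continuousOn hC.continuousOn)))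
        hε.continuousOn (fun θ hθ => ne_of_gt (hε_pos θ hθ)))
  have hac : ∀ i, ContinuousOn (fun θ => a θ i) Ω := fun i =>
    (continuous_apply i).comp_continuousOn ha.continuousOn
  have hbc : ∀ j, ContinuousOn (fun θ => b θ j) Ω := fun j =>
    (continuous_apply j).comp_continuousOn hb.continuousOn
  have hKminc : ContinuousOn Kmin Ω := by
    rw [hKmin_def]
    exact ContinuousOn.finset_inf'_apply _ (fun q _ => hKc q.1 q.2)
  have hKmaxc : ContinuousOn Kmax Ω := by
    rw [hKmax_def]
    exact ContinuousOn.finset_sup'_apply _ (fun q _ => hKc q.1 q.2)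
  have hLac : ContinuousOn La Ω := by
    rw [hLa_def]
    exact ContinuousOn.finset_sup'_apply _ (fun q _ =>
      ((hac q.1).log (fun θ hθ => ne_of_gt (ha_pos θ hθ q.1))).sub
        ((hac q.2).log (fun θ hθ => ne_of_gt (ha_pos θ hθ q.2))))
  have hOxc : ContinuousOn Ox Ω := by
    rw [hOx_def]
    exact ContinuousOn.finset_sup'_apply _ (fun q _ =>
      ((continuous_apply q.1).comp_continuousOn hx₀.continuousOn).sub
        ((continuous_apply q.2).comp_continuousOn hx₀.continuousOn))
  have hηc : ContinuousOn η Ω := by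
    rw [hη_def]
    exact hKminc.div hKmaxc (fun θ _ => ne_of_gt (hKmax_pos θ))
  have hBc : ContinuousOn B Ω := by
    rw [hB_def]
    exact hLac.add ((hKmaxc.log (fun θ _ => ne_of_gt (hKmax_pos θ))).sub
      (hKminc.log (fun θ _ => ne_of_gt (hKmin_pos θ))))
  have hDsc : ContinuousOn Ds Ω := by
    rw [hDs_def]
    exact (continuousOn_const.mul hBc).add continuousOn_const
  have hρc : ContinuousOn ρ Ω := by
    rw [hρ_def]
    exact continuousOn_const.sub ((hηc.pow 2).mul
      (Real.continuous_exp.comp_continuousOn hDsc.neg))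
  have hC₀c : ContinuousOn C₀ Ω := by
    rw [hC₀_def]
    exact ((hOxc.add (continuousOn_const.mul hBc)).add continuousOn_const).div hρc
      (fun θ _ => ne_of_gt (hρ01 θ).1)
  have hcc : ContinuousOn c Ω := by
    rw [hc_def]
    exact hC₀c.div (continuousOn_const.sub hρc)
      (fun θ _ => ne_of_gt (by linarith [(hρ01 θ).2]))
  -- continuity of the iterates
  have hxc : ∀ k, ContinuousOn (fun θ => x k θ) Ω := by
    intro k
    induction k with
    | zero => exact ContinuousOn.congr hx₀.continuousOn (fun θ hθ => hx_zero θ hθ)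
    | succ k ih =>
      have hform : ContinuousOn (fun θ => (fun i => Real.log (a θ i) -
          Real.log (∑ j, K θ i j * (b θ j / ∑ i', K θ i' j * Real.exp (x k θ i'))))) Ω := by
        rw [continuousOn_pi]
        intro i
        have hSvc : ∀ j, ContinuousOn (fun θ => ∑ i', K θ i' j * Real.exp (x k θ i')) Ω :=
          fun j => continuousOn_finset_sum _ fun i' _ =>
            (hKc i' j).mul (Real.continuous_exp.comp_continuousOn
              ((continuous_apply i').comp_continuousOn ih))
        have hSvp : ∀ θ ∈ Ω, ∀ j, (0:ℝ) < ∑ i', K θ i' j * Real.exp (x k θ i') := fun θ hθ j =>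
          Finset.sum_pos (fun i' _ => mul_pos (hKpos θ i' j) (Real.exp_pos _)) Finset.univ_nonempty
        have hTvc : ContinuousOn
            (fun θ => ∑ j, K θ i j * (b θ j / ∑ i', K θ i' j * Real.exp (x k θ i'))) Ω :=
          continuousOn_finset_sum _ fun j _ =>
            (hKc i j).mul ((hbc j).div (hSvc j) (fun θ hθ => ne_of_gt (hSvp θ hθ j)))
        have hTvp : ∀ θ ∈ Ω, (0:ℝ) < ∑ j, K θ i j * (b θ j / ∑ i', K θ i' j * Real.exp (x k θ i')) :=
          fun θ hθ => Finset.sum_pos (fun j _ => mul_pos (hKpos θ i j)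
            (div_pos (hb_pos θ hθ j) (hSvp θ hθ j))) Finset.univ_nonempty
        exact ((hac i).log (fun θ hθ => ne_of_gt (ha_pos θ hθ i))).sub
          (hTvc.log (fun θ hθ => ne_of_gt (hTvp θ hθ)))
      refine ContinuousOn.congr hform (fun θ hθ => ?_)
      rw [hx_rec k θ hθ]
      funext i
      exact hF (x k θ) θ i
  have hLccont : Continuous (fun y : Fin n → ℝ => Lc y) := by
    have e1 : (fun y : Fin n → ℝ => Lc y) = fun y : Fin n → ℝ => (fun i => y i - (∑ i', y i') / n) := by
      funext y i; exact hLc y i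
    rw [e1]
    exact continuous_pi fun i => (continuous_apply i).sub
      ((continuous_finset_sum _ fun i' _ => continuous_apply i').div_const _)
  have hzc : ∀ k, ContinuousOn (fun θ => z k θ) Ω := fun k =>
    hLccont.comp_continuousOn (hxc k)
  -- continuity of xbar on Ω via locally uniform convergence
  have hxbarc : ContinuousOn xbar Ω := by
    intro θ₀ hθ₀
    set r₀ : ℝ := (ρ θ₀ + 1) / 2 with hr₀_def
    have hr₀0 : 0 < r₀ := by simp only [hr₀_def]; exact div_pos (by linarith [(hρ01 θ₀).1]) two_pos
    have hr₀1 : r₀ < 1 := by simp only [hr₀_def]; rw [div_lt_one two_pos]; linarith [(hρ01 θ₀).2]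
    set U : Set (Fin p → ℝ) := (Ω ∩ c ⁻¹' (Set.Iio (c θ₀ + 1))) ∩ (Ω ∩ ρ ⁻¹' (Set.Iio r₀)) with hU_def
    have hUopen : IsOpen U :=
      (hcc.isOpen_inter_preimage hΩ_open isOpen_Iio).inter
        (hρc.isOpen_inter_preimage hΩ_open isOpen_Iio)
    have hθ₀U : θ₀ ∈ U := by
      refine ⟨⟨hθ₀, ?_⟩, ⟨hθ₀, ?_⟩⟩
      · simp only [Set.mem_preimage, Set.mem_Iio]; linarith [hcpos θ₀]
      · simp only [Set.mem_preimage, Set.mem_Iio, hr₀_def]; linarith [(hρ01 θ₀).2]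
    have hUΩ : U ⊆ Ω := fun θ hθ => hθ.1.1
    have htu : TendstoUniformlyOn (fun k θ => z k θ) xbar Filter.atTop U := by
      rw [Metric.tendstoUniformlyOn_iff]
      intro εp hεp
      have hto : Filter.Tendsto (fun k => (c θ₀ + 1) * r₀ ^ k) Filter.atTop (nhds 0) := by
        have := tendsto_pow_atTop_nhds_zero_of_lt_one (le_of_lt hr₀0) hr₀1
        simpa using this.const_mul (c θ₀ + 1)
      filter_upwards [hto.eventually (gt_mem_nhds hεp)] with k hk θ hθU
      have hθΩ : θ ∈ Ω := hUΩ hθU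
      have h1 : dist (z k θ) (xbar θ) ≤ c θ * ρ θ ^ k := by
        rw [dist_eq_norm]
        have := hmain k θ hθΩ
        rw [hLcbar θ hθΩ] at this
        simpa only [hz_def] using this
      have h2 : c θ * ρ θ ^ k ≤ (c θ₀ + 1) * r₀ ^ k := by
        have hcθ : c θ ≤ c θ₀ + 1 := le_of_lt hθU.1.2
        have hρθ : ρ θ ≤ r₀ := le_of_lt hθU.2.2
        have hp1 : ρ θ ^ k ≤ r₀ ^ k := pow_le_pow_left₀ (le_of_lt (hρ01 θ).1) hρθ k
        have hp2 : (0:ℝ) ≤ ρ θ ^ k := pow_nonneg (le_of_lt (hρ01 θ).1) k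
        nlinarith [hcpos θ, pow_nonneg (le_of_lt hr₀0) k]
      rw [dist_comm] at h1
      calc dist (xbar θ) (z k θ) ≤ c θ * ρ θ ^ k := h1
        _ ≤ (c θ₀ + 1) * r₀ ^ k := h2
        _ < εp := hk
    have hcontU : ContinuousOn xbar U :=
      htu.continuousOn (Filter.Frequently.of_forall fun k => (hzc k).mono hUΩ)
    exact ((hcontU.continuousAt (hUopen.mem_nhds hθ₀U)).continuousWithinAt)
  -- assembling the result
  refine ⟨xbar, hfix, ?_, c, ρ, hcc, hρc, fun θ _ => hcpos θ, fun θ _ => hρ01 θ, hmain⟩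
  exact ContinuousOn.congr hxbarc (fun θ hθ => hLcbar θ hθ)
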